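/- The approximate nonnegative degree satisfies deg⁺_{ε²}(f^∨) ≥ deg⁺_ε(2 - f) for any boolean-valued function f : {0,1}^n → {0,1} and any error ε > 0, where f^∨(x,y) = f(x) ∨ f(y). -/

import Mathlib

/-- A conjunction of literals over variables indexed by `ι`, given as a partial assignment. -/
def Conj (ι : Type*) : Type _ := ι → Option Bool

/-- The width of a conjunction: the number of literals it mentions. -/
def Conj.width {ι : Type*} [Fintype ι] (c : Conj ι) : ℕ :=
  (Finset.univ.filter fun i => (c i).isSome).card

/-- The 0/1 indicator function of a conjunction. -/
def Conj.eval {ι : Type*} [Fintype ι] [DecidableEq ι] (c : Conj ι) (x : ι → Bool) : ℝ :=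
  if ∀ i b, c i = some b → x i = b then 1 else 0

/-- `g` is a conical `d`-junta: a nonnegative linear combination of width-`≤ d` conjunctions. -/
def IsConicalJunta {ι : Type*} [Fintype ι] [DecidableEq ι] (d : ℕ)
    (g : (ι → Bool) → ℝ) : Prop :=
  ∃ (m : ℕ) (c : Fin m → Conj ι) (w : Fin m → ℝ),
    (∀ i, 0 ≤ w i) ∧ (∀ i, (c i).width ≤ d) ∧
    ∀ x, g x = ∑ i, w i * (c i).eval x

/-- The `ε`-approximate nonnegative degree of `f`: the least `d` such that some conical
`d`-junta approximates `f` within `ε` pointwise. -/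
noncomputable def nndeg {ι : Type*} [Fintype ι] [DecidableEq ι] (ε : ℝ)
    (f : (ι → Bool) → ℝ) : ℕ :=
  sInf {d | ∃ g, IsConicalJunta d g ∧ ∀ x, |f x - g x| ≤ ε}

section Aux

variable {ι κ : Type*} [Fintype ι] [DecidableEq ι] [Fintype κ] [DecidableEq κ]

instance : Fintype (Conj ι) := inferInstanceAs (Fintype (ι → Option Bool))
noncomputable instance : DecidableEq (Conj ι) :=
  inferInstanceAs (DecidableEq (ι → Option Bool))

lemma Conj.eval_nonneg (c : Conj ι) (x : ι → Bool) : 0 ≤ c.eval x := by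
  unfold Conj.eval; split_ifs <;> norm_num

lemma Conj.eval_le_one (c : Conj ι) (x : ι → Bool) : c.eval x ≤ 1 := by
  unfold Conj.eval; split_ifs <;> norm_num

lemma Conj.exists_eval_eq_one (c : Conj ι) : ∃ x, c.eval x = 1 := by
  refine ⟨fun i => (c i).getD true, ?_⟩
  unfold Conj.eval
  rw [if_pos]
  intro i b hb
  simp [hb]

/-- Exact representation of a nonnegative function as a conical junta of full width. -/
lemma isConicalJunta_card {F : (ι → Bool) → ℝ} (hF : ∀ x, 0 ≤ F x) :
    IsConicalJunta (Fintype.card ι) F := by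
  classical
  set m := Fintype.card (ι → Bool)
  set e : Fin m ≃ (ι → Bool) := (Fintype.equivFin (ι → Bool)).symm
  refine ⟨m, fun i => (fun j => some (e i j) : Conj ι), fun i => F (e i),
    fun i => hF _, fun i => ?_, fun x => ?_⟩
  · unfold Conj.width
    simp
  · have heval : ∀ i : Fin m, Conj.eval (fun j => some (e i j)) x
        = if x = e i then 1 else 0 := by
      intro i
      unfold Conj.eval
      congr 1
      simp only [eq_iff_iff]
      constructor
      · intro h; funext j; exact h j (e i j) rfl
      · rintro rfl j b hb; exact Option.some_injective _ hb
    simp only [heval, mul_ite, mul_one, mul_zero]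
    have hiff : ∀ i : Fin m, (x = e i) = (i = e.symm x) := by
      intro i
      simp only [eq_iff_iff]
      rw [eq_comm (a := i), Equiv.symm_apply_eq, eq_comm]
    simp only [hiff]
    rw [Finset.sum_ite_eq' Finset.univ (e.symm x) (fun i => F (e i)), if_pos (Finset.mem_univ _)]
    simp

/-- A nonnegative coefficient vector supported on small-width conjunctions gives a junta. -/
lemma isConicalJunta_of_coeffs (d : ℕ) (W : Conj ι → ℝ) (hW0 : ∀ C, 0 ≤ W C)
    (hWd : ∀ C : Conj ι, ¬ C.width ≤ d → W C = 0) :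
    IsConicalJunta d (fun x => ∑ C : Conj ι, W C * C.eval x) := by
  classical
  set p : Conj ι → Prop := fun C => C.width ≤ d with hp
  set m := Fintype.card {C : Conj ι // p C}
  set e : Fin m ≃ {C : Conj ι // p C} := (Fintype.equivFin _).symm
  refine ⟨m, fun i => (e i).1, fun i => W (e i).1, fun i => hW0 _, fun i => (e i).2,
    fun x => ?_⟩
  have h1 : ∑ i : Fin m, W (e i).1 * Conj.eval (e i).1 x
      = ∑ C : {C : Conj ι // p C}, W C.1 * Conj.eval C.1 x :=
    Fintype.sum_equiv e _ _ (fun i => rfl)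
  have h2 : ∑ C : {C : Conj ι // p C}, W C.1 * Conj.eval C.1 x
      = ∑ C ∈ Finset.univ.filter p, W C * Conj.eval C x := by
    rw [Finset.sum_subtype (p := p) (Finset.univ.filter p) (fun C => by simp)
      (fun C => W C * Conj.eval C x)]
  rw [h1, h2]
  refine (Finset.sum_subset (Finset.subset_univ _) ?_).symm
  intro C _ hC
  simp only [Finset.mem_filter, Finset.mem_univ, true_and] at hC
  rw [hWd C hC, zero_mul]

def Conj.left (c : Conj (ι ⊕ κ)) : Conj ι := fun i => c (Sum.inl i)
def Conj.right (c : Conj (ι ⊕ κ)) : Conj κ := fun j => c (Sum.inr j)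

lemma Conj.width_left_le (c : Conj (ι ⊕ κ)) : c.left.width ≤ c.width := by
  unfold Conj.width
  apply Finset.card_le_card_of_injOn Sum.inl
  · intro i hi
    exact Finset.mem_filter.mpr ⟨Finset.mem_univ _, (Finset.mem_filter.mp hi).2⟩
  · exact Sum.inl_injective.injOn

lemma Conj.width_right_le (c : Conj (ι ⊕ κ)) : c.right.width ≤ c.width := by
  unfold Conj.width
  apply Finset.card_le_card_of_injOn Sum.inr
  · intro i hi
    exact Finset.mem_filter.mpr ⟨Finset.mem_univ _, (Finset.mem_filter.mp hi).2⟩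
  · exact Sum.inr_injective.injOn

lemma Conj.eval_elim (c : Conj (ι ⊕ κ)) (x : ι → Bool) (y : κ → Bool) :
    c.eval (Sum.elim x y) = c.left.eval x * c.right.eval y := by
  unfold Conj.eval Conj.left Conj.right
  by_cases h1 : ∀ i b, c (Sum.inl i) = some b → x i = b
  · by_cases h2 : ∀ j b, c (Sum.inr j) = some b → y j = b
    · rw [if_pos h1, if_pos h2, if_pos, one_mul]
      rintro (i | j) b hb
      exacts [h1 i b hb, h2 j b hb]
    · rw [if_neg h2, mul_zero, if_neg]
      intro h
      exact h2 fun j b hb => h (Sum.inr j) b hb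
  · rw [if_neg h1, zero_mul, if_neg]
    intro h
    exact h1 fun i b hb => h (Sum.inl i) b hb

/-- Representation of a continuous linear functional on a finite product. -/
lemma clm_eq_sum {α : Type*} [Fintype α] [DecidableEq α]
    (ℓ : ((α → ℝ)) →L[ℝ] ℝ) (v : α → ℝ) :
    ℓ v = ∑ a, ℓ (Pi.single a 1) * v a := by
  have hv : v = ∑ a, v a • (Pi.single a 1 : α → ℝ) := by
    funext b
    simp [Finset.sum_apply, Pi.single_apply]
  conv_lhs => rw [hv]
  rw [map_sum]
  refine Finset.sum_congr rfl fun a _ => ?_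
  rw [map_smul, smul_eq_mul, mul_comm]

end Aux

set_option maxHeartbeats 2000000 in
/-- Key duality lemma: from a conical `D`-junta approximating `f^∨` within `ε²`,
we get a conical `D`-junta approximating `2 - f` within `ε`. -/
lemma keyA {ι : Type*} [Fintype ι] [DecidableEq ι] (ε : ℝ) (hε : 0 < ε)
    (f : (ι → Bool) → ℝ) (hf : ∀ x, f x = 0 ∨ f x = 1) (D : ℕ)
    (h : ((ι ⊕ ι) → Bool) → ℝ) (hj : IsConicalJunta D h)
    (hap : ∀ z : (ι ⊕ ι) → Bool,
      |(f (z ∘ Sum.inl) + f (z ∘ Sum.inr) - f (z ∘ Sum.inl) * f (z ∘ Sum.inr)) - h z| ≤ ε ^ 2) :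
    ∃ g, IsConicalJunta D g ∧ ∀ x, |(2 - f x) - g x| ≤ ε := by
  classical
  by_contra hno
  push_neg at hno
  obtain ⟨m, c, w, hw0, hwd, hrep⟩ := hj
  set Wh : ℝ := ∑ i, w i with hWhdef
  have hWh0 : 0 ≤ Wh := hWhdef ▸ Finset.sum_nonneg fun i _ => hw0 i
  clear_value Wh
  set M : ℝ := max 3 ((Wh + 2 * ε + 4) / (2 * ε) + 1) with hMdef
  have hM3 : (3 : ℝ) ≤ M := hMdef ▸ le_max_left _ _
  have hMle : (Wh + 2 * ε + 4) / (2 * ε) + 1 ≤ M := hMdef ▸ le_max_right _ _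
  clear_value M
  have hM0 : (0 : ℝ) < M := by linarith
  have hM2' : Wh + 4 < 2 * ε * M := by
    have h1 : (Wh + 4) / (2 * ε) ≤ (Wh + 2 * ε + 4) / (2 * ε) := by gcongr <;> linarith
    have h2 := hMle
    have h3 : (Wh + 4) / (2 * ε) < M := by linarith
    rw [div_lt_iff₀ (by positivity)] at h3
    linarith [mul_comm M (2 * ε)]
  -- the compact convex set of bounded junta values plus error box
  set T : (Conj ι → ℝ) → ((ι → Bool) → ℝ) := fun W x => ∑ C : Conj ι, W C * C.eval x with hT
  have hTadd : ∀ W W' : Conj ι → ℝ, T (W + W') = T W + T W' := by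
    intro W W'
    funext x
    simp only [T, Pi.add_apply, add_mul, Finset.sum_add_distrib]
  have hTsmul : ∀ (r : ℝ) (W : Conj ι → ℝ), T (r • W) = r • T W := by
    intro r W
    funext x
    simp only [T, Pi.smul_apply, smul_eq_mul, Finset.mul_sum, mul_assoc]
  set L : ((Conj ι → ℝ) × ((ι → Bool) → ℝ)) →ₗ[ℝ] ((ι → Bool) → ℝ) :=
    { toFun := fun p => T p.1 + p.2
      map_add' := by
        intro p q
        show T (p + q).1 + (p + q).2 = (T p.1 + p.2) + (T q.1 + q.2)
        rw [Prod.fst_add, Prod.snd_add, hTadd]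
        abel
      map_smul' := by
        intro r p
        show T (r • p).1 + (r • p).2 = (RingHom.id ℝ) r • (T p.1 + p.2)
        rw [Prod.smul_fst, Prod.smul_snd, hTsmul, RingHom.id_apply, smul_add] } with hL
  set Box : Set (Conj ι → ℝ) :=
    Set.univ.pi fun C : Conj ι => if C.width ≤ D then Set.Icc 0 M else {0} with hBoxdef
  set Cube : Set ((ι → Bool) → ℝ) := Set.univ.pi fun _ => Set.Icc (-ε) ε with hCubedef
  set A : Set ((ι → Bool) → ℝ) := L '' (Box ×ˢ Cube) with hAdef
  have hAconv : Convex ℝ A := by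
    refine Convex.linear_image (Convex.prod ?_ ?_) L
    · exact convex_pi fun C _ => by split_ifs; exacts [convex_Icc _ _, convex_singleton _]
    · exact convex_pi fun _ _ => convex_Icc _ _
  have hAclosed : IsClosed A := by
    refine IsCompact.isClosed (IsCompact.image (IsCompact.prod ?_ ?_)
      L.continuous_of_finiteDimensional)
    · exact isCompact_univ_pi fun C => by
        split_ifs; exacts [isCompact_Icc, isCompact_singleton]
    · exact isCompact_univ_pi fun _ => isCompact_Icc
  have hmemA : ∀ W ∈ Box, ∀ e ∈ Cube, T W + e ∈ A := fun W hW e he => ⟨(W, e), ⟨hW, he⟩, rfl⟩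
  have hnotmem : (fun x => 2 - f x) ∉ A := by
    rintro ⟨⟨W, e⟩, ⟨hW, he⟩, heq⟩
    have hW' : ∀ C : Conj ι, (C.width ≤ D → 0 ≤ W C ∧ W C ≤ M) ∧ (¬ C.width ≤ D → W C = 0) := by
      intro C
      have hmem : W C ∈ if C.width ≤ D then Set.Icc (0:ℝ) M else {0} := hW C (Set.mem_univ C)
      constructor <;> intro hC
      · rw [if_pos hC] at hmem; exact hmem
      · rw [if_neg hC] at hmem; exact hmem
    have hgj : IsConicalJunta D (fun x => ∑ C : Conj ι, W C * C.eval x) := by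
      refine isConicalJunta_of_coeffs D W (fun C => ?_) (fun C hC => (hW' C).2 hC)
      by_cases hC : C.width ≤ D
      · exact ((hW' C).1 hC).1
      · rw [(hW' C).2 hC]
    obtain ⟨x, hx⟩ := hno _ hgj
    have hex := he x (Set.mem_univ x)
    have heq' : (2 - f x) - (∑ C : Conj ι, W C * C.eval x) = e x := by
      have hx2 := congrFun heq x
      simp only [L, T, LinearMap.coe_mk, AddHom.coe_mk, Pi.add_apply] at hx2
      linarith
    rw [heq'] at hx
    have : |e x| ≤ ε := abs_le.mpr ⟨hex.1, hex.2⟩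
    linarith
  obtain ⟨ℓ, u, hsep, hu⟩ := geometric_hahn_banach_closed_point hAconv hAclosed hnotmem
  set Φ : (ι → Bool) → ℝ := fun x => ℓ (Pi.single x 1) with hΦ
  have hrepℓ : ∀ v : (ι → Bool) → ℝ, ℓ v = ∑ x, Φ x * v x := fun v => clm_eq_sum ℓ v
  set N : ℝ := ∑ x, |Φ x| with hNdef
  have hN0 : 0 ≤ N := hNdef ▸ Finset.sum_nonneg fun x _ => abs_nonneg _
  set estar : (ι → Bool) → ℝ := fun x => if 0 ≤ Φ x then ε else -ε with hestardef
  have hestarCube : estar ∈ Cube := by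
    intro x _
    simp only [estar]
    split_ifs <;> constructor <;> linarith
  have hℓestar : ℓ estar = ε * N := by
    rw [hrepℓ, hNdef, Finset.mul_sum]
    refine Finset.sum_congr rfl fun x _ => ?_
    simp only [estar]
    rcases le_or_gt 0 (Φ x) with hx | hx
    · rw [if_pos hx, abs_of_nonneg hx]; ring
    · rw [if_neg (not_le.mpr hx), abs_of_neg hx]; ring
  have hBox0 : (0 : Conj ι → ℝ) ∈ Box := by
    intro C _
    simp only [Pi.zero_apply]
    split_ifs
    · exact ⟨le_rfl, by linarith⟩
    · rfl
  have hT0 : T 0 = 0 := by funext x; simp [T]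
  have h1 : ε * N < u := by
    have hmem := hsep _ (hmemA 0 hBox0 estar hestarCube)
    rw [hT0, zero_add, hℓestar] at hmem
    exact hmem
  have hNpos : 0 < N := by
    rcases hN0.lt_or_eq with hlt | heqN
    · exact hlt
    exfalso
    have hΦ0 : ∀ x, Φ x = 0 := by
      intro x
      have := (Finset.sum_eq_zero_iff_of_nonneg (fun x _ => abs_nonneg (Φ x))).mp heqN.symm
      exact abs_eq_zero.mp (this x (Finset.mem_univ x))
    have h2f : ℓ (fun x => 2 - f x) = 0 := by
      rw [hrepℓ]
      exact Finset.sum_eq_zero fun x _ => by rw [hΦ0 x, zero_mul]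
    rw [← heqN] at h1
    simp only [mul_zero] at h1
    linarith [hu, h2f]
  have hu0 : 0 < u := lt_of_le_of_lt (by positivity) h1
  set η : ℝ := (u - ε * N) / M with hηdef
  clear_value η
  have hηpos : 0 < η := hηdef ▸ div_pos (by linarith) hM0
  have hCle : ∀ C : Conj ι, C.width ≤ D → ℓ C.eval ≤ η := by
    intro C hC
    set W : Conj ι → ℝ := fun C' => if C' = C then M else 0 with hWdef
    have hWBox : W ∈ Box := by
      intro C' _
      simp only [W]
      by_cases h' : C' = C
      · subst h'; rw [if_pos rfl, if_pos hC]; exact ⟨by linarith, le_rfl⟩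
      · rw [if_neg h']; split_ifs
        exacts [⟨le_rfl, by linarith⟩, rfl]
    have hTW : T W = M • C.eval := by
      funext x
      simp only [T, W, ite_mul, zero_mul, Pi.smul_apply, smul_eq_mul]
      rw [Finset.sum_ite_eq' Finset.univ C (fun C' => M * C'.eval x), if_pos (Finset.mem_univ _)]
    have hmem := hsep _ (hmemA W hWBox estar hestarCube)
    rw [hTW, map_add, map_smul, smul_eq_mul, hℓestar] at hmem
    rw [hηdef, le_div_iff₀ hM0]
    linarith [mul_comm M (ℓ C.eval)]
  have habsC : ∀ C : Conj ι, |ℓ C.eval| ≤ N := by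
    intro C
    rw [hrepℓ, hNdef]
    refine (Finset.abs_sum_le_sum_abs _ _).trans (Finset.sum_le_sum fun x _ => ?_)
    rw [abs_mul]
    calc |Φ x| * |C.eval x| ≤ |Φ x| * 1 := by
          refine mul_le_mul_of_nonneg_left ?_ (abs_nonneg _)
          rw [abs_of_nonneg (Conj.eval_nonneg C x)]
          exact Conj.eval_le_one C x
      _ = |Φ x| := mul_one _
  set S : ℝ := ∑ x, Φ x with hSdef
  have hSle : S ≤ η := by
    have hC0eval : (Conj.eval (fun _ => none : Conj ι)) = fun _ => 1 := by
      funext x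
      unfold Conj.eval
      rw [if_pos]
      intro i b hb
      exact absurd hb (by simp)
    have hC0w : (Conj.width (fun _ => none : Conj ι)) = 0 := by
      unfold Conj.width
      simp
    have := hCle (fun _ => none) (by rw [hC0w]; exact Nat.zero_le D)
    rw [hC0eval, hrepℓ] at this
    simpa using this
  set t : ℝ := ∑ x, Φ x * f x with htdef
  have hu2 : u < 2 * S - t := by
    have heq2 : ℓ (fun x => 2 - f x) = 2 * S - t := by
      rw [hrepℓ, hSdef, htdef, Finset.mul_sum, ← Finset.sum_sub_distrib]
      exact Finset.sum_congr rfl fun x _ => by ring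
    linarith [hu, heq2.le, heq2.ge]
  have huN : u < 2 * N := by
    have hle : ℓ (fun x => 2 - f x) ≤ 2 * N := by
      rw [hrepℓ, hNdef, Finset.mul_sum]
      refine Finset.sum_le_sum fun x _ => ?_
      have h2f : |2 - f x| ≤ 2 := by rcases hf x with hx | hx <;> rw [hx] <;> norm_num
      calc Φ x * (2 - f x) ≤ |Φ x * (2 - f x)| := le_abs_self _
        _ = |Φ x| * |2 - f x| := abs_mul _ _
        _ ≤ |Φ x| * 2 := mul_le_mul_of_nonneg_left h2f (abs_nonneg _)
        _ = 2 * |Φ x| := mul_comm _ _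
    linarith [hu]
  -- double sums
  set G : ℝ := ∑ x, ∑ y, Φ x * Φ y * (f x + f y - f x * f y) with hGdef
  set P : ℝ := ∑ x, ∑ y, Φ x * Φ y * h (Sum.elim x y) with hPdef
  have hGval : G = 2 * S * t - t * t := by
    have hxy : ∀ x : ι → Bool, (∑ y, Φ x * Φ y * (f x + f y - f x * f y))
        = Φ x * f x * S + Φ x * t - Φ x * f x * t := by
      intro x
      rw [hSdef, htdef, Finset.mul_sum, Finset.mul_sum, Finset.mul_sum,
        ← Finset.sum_add_distrib, ← Finset.sum_sub_distrib]
      exact Finset.sum_congr rfl fun y _ => by ring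
    rw [hGdef]
    calc (∑ x, ∑ y, Φ x * Φ y * (f x + f y - f x * f y))
        = ∑ x, (Φ x * f x * S + Φ x * t - Φ x * f x * t) :=
          Finset.sum_congr rfl fun x _ => hxy x
      _ = (∑ x, Φ x * f x) * S + (∑ x, Φ x) * t - (∑ x, Φ x * f x) * t := by
          rw [Finset.sum_sub_distrib, Finset.sum_add_distrib, Finset.sum_mul, Finset.sum_mul,
            Finset.sum_mul]
      _ = 2 * S * t - t * t := by rw [← htdef, ← hSdef]; ring
  have hPG : P - G ≤ ε ^ 2 * (N * N) := by
    have hdiff : P - G = ∑ x, ∑ y, Φ x * Φ y *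
        (h (Sum.elim x y) - (f x + f y - f x * f y)) := by
      rw [hPdef, hGdef, ← Finset.sum_sub_distrib]
      refine Finset.sum_congr rfl fun x _ => ?_
      rw [← Finset.sum_sub_distrib]
      exact Finset.sum_congr rfl fun y _ => by ring
    have hNN : (∑ x, ∑ y, |Φ x| * |Φ y| * ε ^ 2) = ε ^ 2 * (N * N) := by
      rw [hNdef, Fintype.sum_mul_sum, Finset.mul_sum]
      refine Finset.sum_congr rfl fun x _ => ?_
      rw [Finset.mul_sum]
      exact Finset.sum_congr rfl fun y _ => by ring
    rw [hdiff, ← hNN]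
    refine Finset.sum_le_sum fun x _ => Finset.sum_le_sum fun y _ => ?_
    have hz := hap (Sum.elim x y)
    rw [Sum.elim_comp_inl, Sum.elim_comp_inr] at hz
    have habs : |h (Sum.elim x y) - (f x + f y - f x * f y)| ≤ ε ^ 2 := by
      rw [abs_sub_comm]; exact hz
    calc Φ x * Φ y * (h (Sum.elim x y) - (f x + f y - f x * f y))
        ≤ |Φ x * Φ y * (h (Sum.elim x y) - (f x + f y - f x * f y))| := le_abs_self _
      _ = |Φ x| * |Φ y| * |h (Sum.elim x y) - (f x + f y - f x * f y)| := by
          rw [abs_mul, abs_mul]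
      _ ≤ |Φ x| * |Φ y| * ε ^ 2 := by
          refine mul_le_mul_of_nonneg_left habs (by positivity)
  have hPfact : P = ∑ i, w i *
      (ℓ (Conj.eval (Conj.left (c i))) * ℓ (Conj.eval (Conj.right (c i)))) := by
    have h1' : ∀ x y : ι → Bool, Φ x * Φ y * h (Sum.elim x y)
        = ∑ i, w i * ((Φ x * (Conj.left (c i)).eval x) * (Φ y * (Conj.right (c i)).eval y)) := by
      intro x y
      rw [hrep (Sum.elim x y), Finset.mul_sum]
      refine Finset.sum_congr rfl fun i _ => ?_
      rw [Conj.eval_elim]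
      ring
    rw [hPdef]
    calc (∑ x, ∑ y, Φ x * Φ y * h (Sum.elim x y))
        = ∑ x, ∑ y, ∑ i, w i * ((Φ x * (Conj.left (c i)).eval x) *
            (Φ y * (Conj.right (c i)).eval y)) :=
          Finset.sum_congr rfl fun x _ => Finset.sum_congr rfl fun y _ => h1' x y
      _ = ∑ x, ∑ i, ∑ y, w i * ((Φ x * (Conj.left (c i)).eval x) *
            (Φ y * (Conj.right (c i)).eval y)) :=
          Finset.sum_congr rfl fun x _ => Finset.sum_comm
      _ = ∑ i, ∑ x, ∑ y, w i * ((Φ x * (Conj.left (c i)).eval x) *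
            (Φ y * (Conj.right (c i)).eval y)) := Finset.sum_comm
      _ = ∑ i, w i * (ℓ (Conj.eval (Conj.left (c i))) * ℓ (Conj.eval (Conj.right (c i)))) := by
          refine Finset.sum_congr rfl fun i _ => ?_
          rw [hrepℓ (Conj.eval (Conj.left (c i))), hrepℓ (Conj.eval (Conj.right (c i))),
            Fintype.sum_mul_sum, Finset.mul_sum]
          refine Finset.sum_congr rfl fun x _ => ?_
          rw [Finset.mul_sum]
  have hPlb : -(Wh * (η * N)) ≤ P := by
    have hterm : ∀ i, -(w i * (η * N)) ≤ w i *
        (ℓ (Conj.eval (Conj.left (c i))) * ℓ (Conj.eval (Conj.right (c i)))) := by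
      intro i
      have hL : ℓ (Conj.eval (Conj.left (c i))) ≤ η :=
        hCle _ ((Conj.width_left_le (c i)).trans (hwd i))
      have hR : ℓ (Conj.eval (Conj.right (c i))) ≤ η :=
        hCle _ ((Conj.width_right_le (c i)).trans (hwd i))
      have haL := abs_le.mp (habsC (Conj.left (c i)))
      have haR := abs_le.mp (habsC (Conj.right (c i)))
      set a := ℓ (Conj.eval (Conj.left (c i)))
      set b := ℓ (Conj.eval (Conj.right (c i)))
      clear_value a b
      have key : -(η * N) ≤ a * b := by
        rcases le_or_gt 0 a with ha | ha
        · nlinarith [mul_nonneg ha (by linarith : (0:ℝ) ≤ b + N),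
            mul_nonneg (by linarith : (0:ℝ) ≤ η - a) hN0]
        · nlinarith [mul_nonneg (by linarith : (0:ℝ) ≤ η - b) (by linarith : (0:ℝ) ≤ -a),
            mul_nonneg (by linarith : (0:ℝ) ≤ a + N) hηpos.le]
      have := mul_le_mul_of_nonneg_left key (hw0 i)
      nlinarith [this]
    rw [hPfact]
    calc -(Wh * (η * N)) = ∑ i, -(w i * (η * N)) := by
          rw [hWhdef, Finset.sum_mul]
          rw [← Finset.sum_neg_distrib]
      _ ≤ _ := Finset.sum_le_sum fun i _ => hterm i
  -- lower bound on t*t - 2*S*t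
  have hηu : η ≤ u / 3 := by
    rw [hηdef]
    have hs1 : (u - ε * N) / M ≤ u / M :=
      (div_le_div_iff_of_pos_right hM0).mpr (by nlinarith [mul_nonneg hε.le hN0])
    have hs2 : u / M ≤ u / 3 := div_le_div_of_nonneg_left hu0.le (by norm_num) hM3
    linarith
  have hfinal1 : (u - 2 * η) * u < Wh * (η * N) + ε ^ 2 * (N * N) := by
    have hlow : (u - 2 * η) * u < (-t) * (2 * S - t) := by
      refine mul_lt_mul'' ?_ hu2 ?_ hu0.le
      · linarith
      · linarith
    have hGneg : (-t) * (2 * S - t) = -G := by rw [hGval]; ring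
    linarith [hPlb, hPG, hlow, hGneg.le, hGneg.ge]
  -- arithmetic contradiction
  have hδ : 0 < u - ε * N := by linarith
  have hηM : η * M = u - ε * N := by rw [hηdef]; field_simp
  have e1 : (u - ε * N) * (u + ε * N) < Wh * η * N + 2 * η * u := by nlinarith [hfinal1]
  have e2 : (u - ε * N) * ((u + ε * N) * M) < (u - ε * N) * (Wh * N + 2 * u) := by
    have := mul_lt_mul_of_pos_right e1 hM0
    have hrw : (Wh * η * N + 2 * η * u) * M = (u - ε * N) * (Wh * N + 2 * u) := by
      linear_combination (Wh * N + 2 * u) * hηM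
    calc (u - ε * N) * ((u + ε * N) * M) = (u - ε * N) * (u + ε * N) * M := by ring
      _ < (Wh * η * N + 2 * η * u) * M := this
      _ = (u - ε * N) * (Wh * N + 2 * u) := hrw
  have e3 : (u + ε * N) * M < Wh * N + 2 * u := lt_of_mul_lt_mul_left e2 hδ.le
  nlinarith [e3, mul_lt_mul_of_pos_right (show 2 * ε * N < u + ε * N by linarith) hM0,
    mul_lt_mul_of_pos_left hM2' hNpos, huN]

/-- For any boolean-valued `f` and `ε > 0`,
`deg⁺_{ε²}(f^∨) ≥ deg⁺_ε(2 - f)`, where `f^∨(x,y) = f(x) ∨ f(y)`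
(the inputs to `f^∨` are indexed by `Fin n ⊕ Fin n`). -/
theorem ufa_stmt4 (n : ℕ) (ε : ℝ) (hε : 0 < ε) (f : (Fin n → Bool) → ℝ)
    (hf : ∀ x, f x = 0 ∨ f x = 1) :
    nndeg ε (fun x => 2 - f x) ≤
      nndeg (ε ^ 2) (fun z : (Fin n ⊕ Fin n) → Bool =>
        f (z ∘ Sum.inl) + f (z ∘ Sum.inr) - f (z ∘ Sum.inl) * f (z ∘ Sum.inr)) := by
  classical
  set Fv : ((Fin n ⊕ Fin n) → Bool) → ℝ := fun z =>
    f (z ∘ Sum.inl) + f (z ∘ Sum.inr) - f (z ∘ Sum.inl) * f (z ∘ Sum.inr) with hFv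
  have hFv0 : ∀ z, 0 ≤ Fv z := by
    intro z
    rw [hFv]
    rcases hf (z ∘ Sum.inl) with h1 | h1 <;> rcases hf (z ∘ Sum.inr) with h2 | h2 <;>
      simp only [h1, h2] <;> norm_num
  have hne : Fintype.card (Fin n ⊕ Fin n) ∈
      {d | ∃ g, IsConicalJunta d g ∧ ∀ z, |Fv z - g z| ≤ ε ^ 2} := by
    refine ⟨Fv, isConicalJunta_card hFv0, fun z => ?_⟩
    simp only [sub_self, abs_zero]
    positivity
  have hmemD : nndeg (ε ^ 2) Fv ∈ {d | ∃ g, IsConicalJunta d g ∧ ∀ z, |Fv z - g z| ≤ ε ^ 2} :=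
    Nat.sInf_mem ⟨_, hne⟩
  obtain ⟨h, hj, hap⟩ := hmemD
  have hap' : ∀ z : (Fin n ⊕ Fin n) → Bool,
      |(f (z ∘ Sum.inl) + f (z ∘ Sum.inr) - f (z ∘ Sum.inl) * f (z ∘ Sum.inr)) - h z| ≤ ε ^ 2 :=
    fun z => hap z
  obtain ⟨g, hg, hgap⟩ := keyA ε hε f hf (nndeg (ε ^ 2) Fv) h hj hap'
  exact Nat.sInf_le ⟨g, hg, hgap⟩
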